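/- Unsorting bijection (Theorem 2.1): for a finite set A of positive integers and nonnegative integers i ≥ 0, j ≥ 1, there is a weight-preserving bijection between L_{i,j}(A) and L_{i+1,j-1}(A). In particular |L_{i,j}(A)| = |L_{i+1,j-1}(A)|, and the weight generating functions ∑_{(T,φ)∈L_{i,j}(A)} ω(T,φ) and ∑_{(T,φ)∈L_{i+1,j-1}(A)} ω(T,φ) are equal. -/

import Mathlib

open MvPolynomial

/-- The minimum of a finite set of naturals (`0` for the empty set). -/
def fmin (B : Finset ℕ) : ℕ := WithTop.untopD 0 B.min

open scoped Classical in
/-- The hook of `v` in the tree on the vertex set `A` with parent function `p`. -/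
noncomputable def hookS {A : Finset ℕ} (p : ↥A → ↥A) (v : ↥A) : Finset ↥A :=
  Finset.univ.filter fun u => ∃ k : ℕ, p^[k] u = v

open scoped Classical in
/-- The set `L_{i,j}(A)`: pairs `(T, φ)`, where `T` is a labelled tree on `A` rooted at
`min A` (encoded by a parent function `t.1` fixing the root, from which every vertex reaches
the root) and `φ = t.2` maps the increasing vertices (`f_T(v) < v`) into `A` (normalized by
`φ v = v` on the root and the decreasing vertices), subject to conditions (1)–(5) of the
paper; in particular `T` has exactly `i` decreasing vertices and exactly `j` increasing
vertices with `φ v ≠ v`. -/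
noncomputable def Lset (A : Finset ℕ) (i j : ℕ) : Finset ((↥A → ↥A) × (↥A → ↥A)) :=
  Finset.univ.filter fun t =>
    (∀ v : ↥A, (v : ℕ) = fmin A → t.1 v = v) ∧
    (∀ v : ↥A, ∃ k : ℕ, (((t.1)^[k] v : ↥A) : ℕ) = fmin A) ∧
    (∀ v : ↥A, ¬ ((t.1 v : ℕ) < (v : ℕ)) → t.2 v = v) ∧
    (∀ v : ↥A, (t.1 v : ℕ) < (v : ℕ) → t.2 v ∈ hookS t.1 v ∧ (v : ℕ) ≤ (t.2 v : ℕ)) ∧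
    (∀ v : ↥A, (t.1 v : ℕ) < (v : ℕ) → t.2 v ≠ v →
      ∀ u : ↥A, (∃ k : ℕ, (t.1)^[k] v = u) → (u : ℕ) ≠ fmin A → (t.1 u : ℕ) < (u : ℕ)) ∧
    (∀ v u : ↥A, (v : ℕ) < (t.1 v : ℕ) → (t.1 u : ℕ) < (u : ℕ) → t.2 u ≠ u →
      (u : ℕ) < (v : ℕ)) ∧
    (Finset.univ.filter fun v : ↥A => (v : ℕ) < (t.1 v : ℕ)).card = i ∧
    (Finset.univ.filter fun v : ↥A => (t.1 v : ℕ) < (v : ℕ) ∧ t.2 v ≠ v).card = j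

open scoped Classical in
/-- The weight `ω(T, φ) = ∏_{increasing v} x_{f_T(v)} y_{v, φ(v)} · ∏_{decreasing v} x_v y_{v, f_T(v)}`,
valued in the polynomial ring with `X (.inl i) = x_i` and `X (.inr (i,j)) = y_{i,j}`. -/
noncomputable def omegaL (A : Finset ℕ) (t : (↥A → ↥A) × (↥A → ↥A)) :
    MvPolynomial (ℕ ⊕ ℕ × ℕ) ℤ :=
  (∏ v ∈ Finset.univ.filter fun v : ↥A => (t.1 v : ℕ) < (v : ℕ),
      X (Sum.inl (t.1 v : ℕ)) * X (Sum.inr ((v : ℕ), (t.2 v : ℕ)))) *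
    ∏ v ∈ Finset.univ.filter fun v : ↥A => (v : ℕ) < (t.1 v : ℕ),
      X (Sum.inl (v : ℕ)) * X (Sum.inr ((v : ℕ), (t.1 v : ℕ)))

open scoped Classical

namespace Unsort

variable {A : Finset ℕ}

lemma mem_hookS (p : ↥A → ↥A) (v u : ↥A) : u ∈ hookS p v ↔ ∃ k : ℕ, p^[k] u = v := by
  simp [hookS]

lemma reach_trans (p : ↥A → ↥A) {x y z : ↥A} (h1 : ∃ k, p^[k] x = y) (h2 : ∃ k, p^[k] y = z) :
    ∃ k, p^[k] x = z := by
  obtain ⟨a, ha⟩ := h1; obtain ⟨b, hb⟩ := h2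
  exact ⟨b + a, by rw [Function.iterate_add_apply, ha, hb]⟩

lemma no_cycle (p : ↥A → ↥A) {r x : ↥A} (hr : p r = r) (hx : ∃ k, p^[k] x = r)
    {d : ℕ} (hd : 1 ≤ d) (hcyc : p^[d] x = x) : x = r := by
  obtain ⟨k, hk⟩ := hx
  have hmul : ∀ s : ℕ, p^[d * s] x = x := by
    intro s
    induction s with
    | zero => simp
    | succ n ih => rw [Nat.mul_succ, Function.iterate_add_apply, hcyc, ih]
  have hkle : k ≤ d * k := Nat.le_mul_of_pos_left k hd
  have h2 : p^[d * k] x = r := by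
    have h3 : p^[(d * k - k) + k] x = r := by
      rw [Function.iterate_add_apply, hk, Function.iterate_fixed hr]
    rwa [Nat.sub_add_cancel hkle] at h3
  rw [hmul k] at h2; exact h2

lemma fmin_eq (hA : A.Nonempty) : fmin A = A.min' hA := by
  rw [fmin, ← Finset.coe_min' hA]; rfl

noncomputable def rt (hA : A.Nonempty) : ↥A := ⟨A.min' hA, A.min'_mem hA⟩

lemma rt_val (hA : A.Nonempty) : ((rt hA : ↥A) : ℕ) = fmin A := (fmin_eq hA).symm

lemma rt_le (hA : A.Nonempty) (x : ↥A) : ((rt hA : ↥A) : ℕ) ≤ (x : ℕ) :=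
  A.min'_le _ x.2

lemma eq_rt_of_val {hA : A.Nonempty} {x : ↥A} (h : (x : ℕ) = fmin A) : x = rt hA := by
  apply Subtype.ext; rw [h, rt_val]

def fwdP (p : ↥A → ↥A) (v c w : ↥A) : ↥A → ↥A :=
  fun x => if x = v then w else if x = c then p v else p x

lemma fwdP_v (p : ↥A → ↥A) (v c w : ↥A) : fwdP p v c w v = w := by simp [fwdP]

lemma fwdP_c (p : ↥A → ↥A) {v c : ↥A} (w : ↥A) (hcv : c ≠ v) : fwdP p v c w c = p v := by
  simp [fwdP, hcv]

lemma fwdP_other (p : ↥A → ↥A) {v c w x : ↥A} (hxv : x ≠ v) (hxc : x ≠ c) :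
    fwdP p v c w x = p x := by simp [fwdP, hxv, hxc]

def bwdP (p' : ↥A → ↥A) (v c : ↥A) : ↥A → ↥A :=
  fun x => if x = v then p' c else if x = c then v else p' x

lemma bwdP_v (p' : ↥A → ↥A) (v c : ↥A) : bwdP p' v c v = p' c := by simp [bwdP]

lemma bwdP_c (p' : ↥A → ↥A) {v c : ↥A} (hcv : c ≠ v) : bwdP p' v c c = v := by
  simp [bwdP, hcv]

lemma bwdP_other (p' : ↥A → ↥A) {v c x : ↥A} (hxv : x ≠ v) (hxc : x ≠ c) :
    bwdP p' v c x = p' x := by simp [bwdP, hxv, hxc]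

section FwdCore

variable {p : ↥A → ↥A} {v c w : ↥A}

lemma ML0 (hvc : ∀ k, p^[k] v ≠ c) :
    ∀ k y, p^[k] y = c → ∃ k', (fwdP p v c w)^[k'] y = c := by
  intro k
  induction k using Nat.strong_induction_on with
  | _ k ih =>
    intro y hy
    by_cases hyc : y = c
    · exact ⟨0, hyc⟩
    rcases k with _ | k
    · exact absurd hy hyc
    have hyv : y ≠ v := by rintro rfl; exact hvc _ hy
    rw [Function.iterate_succ_apply] at hy
    obtain ⟨k', hk'⟩ := ih k (Nat.lt_succ_self k) (p y) hy
    exact ⟨k' + 1, by rw [Function.iterate_succ_apply, fwdP_other p hyv hyc]; exact hk'⟩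

lemma v_reach (hpc : p c = v) (hcv : c ≠ v) (hwc : ∃ k, p^[k] w = c)
    (hvc : ∀ k, p^[k] v ≠ c) : ∃ k, (fwdP p v c w)^[k] v = p v := by
  obtain ⟨k, hk⟩ := hwc
  obtain ⟨k', hk'⟩ := ML0 (w := w) hvc k w hk
  refine reach_trans _ ⟨1, ?_⟩ (reach_trans _ ⟨k', hk'⟩ ⟨1, ?_⟩)
  · simp [fwdP_v]
  · simp [fwdP_c p w hcv]

lemma ML (hpc : p c = v) (hcv : c ≠ v) (hwc : ∃ k, p^[k] w = c)
    (hvc : ∀ k, p^[k] v ≠ c) :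
    ∀ k y x, x ≠ v → p^[k] y = x → ∃ k', (fwdP p v c w)^[k'] y = x := by
  intro k
  induction k using Nat.strong_induction_on with
  | _ k ih =>
    intro y x hxv hy
    rcases k with _ | k
    · exact ⟨0, hy⟩
    rw [Function.iterate_succ_apply] at hy
    by_cases hyv : y = v
    · rw [hyv] at hy
      obtain ⟨k', hk'⟩ := ih k (Nat.lt_succ_self k) (p v) x hxv hy
      rw [hyv]
      exact reach_trans _ (v_reach hpc hcv hwc hvc) ⟨k', hk'⟩
    by_cases hyc : y = c
    · rw [hyc, hpc] at hy
      rcases k with _ | k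
      · simp only [Function.iterate_zero, id_eq] at hy
        exact absurd hy.symm hxv
      rw [Function.iterate_succ_apply] at hy
      obtain ⟨k', hk'⟩ := ih k (by omega) (p v) x hxv hy
      refine reach_trans _ ⟨1, ?_⟩ ⟨k', hk'⟩
      rw [Function.iterate_one, hyc, fwdP_c p w hcv]
    obtain ⟨k', hk'⟩ := ih k (Nat.lt_succ_self k) (p y) x hxv hy
    exact ⟨k' + 1, by rw [Function.iterate_succ_apply, fwdP_other p hyv hyc]; exact hk'⟩

end FwdCore

lemma BML {p' : ↥A → ↥A} {v c : ↥A} {m : ℕ} (hcv : c ≠ v) (hc : p'^[m] v = c) :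
    ∀ k y x, (∀ l, 1 ≤ l → l ≤ m → p'^[l] v ≠ x) → p'^[k] y = x →
      ∃ k', (bwdP p' v c)^[k'] y = x := by
  intro k
  induction k using Nat.strong_induction_on with
  | _ k ih =>
    intro y x hseg hy
    rcases k with _ | k
    · exact ⟨0, hy⟩
    rw [Function.iterate_succ_apply] at hy
    by_cases hyv : y = v
    · rw [hyv] at hy
      have hkm : m ≤ k := by
        by_contra hlt
        push_neg at hlt
        exact hseg (k + 1) (Nat.le_add_left 1 k) hlt ((Function.iterate_succ_apply p' k v) ▸ hy)
      have hy' : p'^[k + 1] v = x := by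
        rw [Function.iterate_succ_apply]; exact hy
      have hx : p'^[k - m] (p' c) = x := by
        have hpc : p' c = p'^[m + 1] v := by rw [← hc, Function.iterate_succ_apply']
        rw [hpc, ← Function.iterate_add_apply, show k - m + (m + 1) = k + 1 by omega]
        exact hy'
      obtain ⟨k', hk'⟩ := ih (k - m) (by omega) (p' c) x hseg hx
      rw [hyv]
      exact reach_trans _ ⟨1, by simp [bwdP_v]⟩ ⟨k', hk'⟩
    by_cases hyc : y = c
    · rw [hyc] at hy
      obtain ⟨k', hk'⟩ := ih k (Nat.lt_succ_self k) (p' c) x hseg hy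
      rw [hyc]
      refine reach_trans _ ⟨2, ?_⟩ ⟨k', hk'⟩
      show bwdP p' v c (bwdP p' v c c) = p' c
      rw [bwdP_c p' hcv, bwdP_v]
    obtain ⟨k', hk'⟩ := ih k (Nat.lt_succ_self k) (p' y) x hseg hy
    exact ⟨k' + 1, by rw [Function.iterate_succ_apply, bwdP_other p' hyv hyc]; exact hk'⟩

/-- the increasing vertices with `φ ≠ id`, i.e. the "sorted" set -/
noncomputable def SF (A : Finset ℕ) (t : (↥A → ↥A) × (↥A → ↥A)) : Finset ↥A :=
  Finset.univ.filter fun x : ↥A => (t.1 x : ℕ) < (x : ℕ) ∧ t.2 x ≠ x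

/-- the decreasing vertices -/
noncomputable def DF (A : Finset ℕ) (t : (↥A → ↥A) × (↥A → ↥A)) : Finset ↥A :=
  Finset.univ.filter fun x : ↥A => (x : ℕ) < (t.1 x : ℕ)

noncomputable def Fmap (A : Finset ℕ) (t : (↥A → ↥A) × (↥A → ↥A)) :
    (↥A → ↥A) × (↥A → ↥A) :=
  if h : (SF A t).Nonempty then
    if hw : ∃ k, t.1^[k] (t.2 ((SF A t).max' h)) = (SF A t).max' h then
      (fwdP t.1 ((SF A t).max' h) (t.1^[Nat.find hw - 1] (t.2 ((SF A t).max' h)))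
        (t.2 ((SF A t).max' h)),
       fun x => if x = (SF A t).max' h then (SF A t).max' h else t.2 x)
    else t
  else t

noncomputable def Gmap (A : Finset ℕ) (t : (↥A → ↥A) × (↥A → ↥A)) :
    (↥A → ↥A) × (↥A → ↥A) :=
  if h : (DF A t).Nonempty then
    if hm : ∃ k, ((t.1^[k + 1] ((DF A t).min' h) : ↥A) : ℕ) < (((DF A t).min' h : ↥A) : ℕ) then
      (bwdP t.1 ((DF A t).min' h) (t.1^[Nat.find hm] ((DF A t).min' h)),
       fun x => if x = (DF A t).min' h then t.1 ((DF A t).min' h) else t.2 x)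
    else t
  else t

lemma Fmap_spec (A : Finset ℕ) (t : (↥A → ↥A) × (↥A → ↥A)) (h : (SF A t).Nonempty)
    (hw : ∃ k, t.1^[k] (t.2 ((SF A t).max' h)) = (SF A t).max' h) :
    Fmap A t = (fwdP t.1 ((SF A t).max' h) (t.1^[Nat.find hw - 1] (t.2 ((SF A t).max' h)))
        (t.2 ((SF A t).max' h)),
      fun x => if x = (SF A t).max' h then (SF A t).max' h else t.2 x) := by
  rw [Fmap, dif_pos h, dif_pos hw]

lemma Gmap_spec (A : Finset ℕ) (t : (↥A → ↥A) × (↥A → ↥A)) (h : (DF A t).Nonempty)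
    (hm : ∃ k, ((t.1^[k + 1] ((DF A t).min' h) : ↥A) : ℕ) < (((DF A t).min' h : ↥A) : ℕ)) :
    Gmap A t = (bwdP t.1 ((DF A t).min' h) (t.1^[Nat.find hm] ((DF A t).min' h)),
      fun x => if x = (DF A t).min' h then t.1 ((DF A t).min' h) else t.2 x) := by
  rw [Gmap, dif_pos h, dif_pos hm]

lemma mem_Lset {A : Finset ℕ} {i j : ℕ} {t : (↥A → ↥A) × (↥A → ↥A)} :
    t ∈ Lset A i j ↔
    ((∀ v : ↥A, (v : ℕ) = fmin A → t.1 v = v) ∧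
    (∀ v : ↥A, ∃ k : ℕ, (((t.1)^[k] v : ↥A) : ℕ) = fmin A) ∧
    (∀ v : ↥A, ¬ ((t.1 v : ℕ) < (v : ℕ)) → t.2 v = v) ∧
    (∀ v : ↥A, (t.1 v : ℕ) < (v : ℕ) → t.2 v ∈ hookS t.1 v ∧ (v : ℕ) ≤ (t.2 v : ℕ)) ∧
    (∀ v : ↥A, (t.1 v : ℕ) < (v : ℕ) → t.2 v ≠ v →
      ∀ u : ↥A, (∃ k : ℕ, (t.1)^[k] v = u) → (u : ℕ) ≠ fmin A → (t.1 u : ℕ) < (u : ℕ)) ∧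
    (∀ v u : ↥A, (v : ℕ) < (t.1 v : ℕ) → (t.1 u : ℕ) < (u : ℕ) → t.2 u ≠ u →
      (u : ℕ) < (v : ℕ)) ∧
    (Finset.univ.filter fun v : ↥A => (v : ℕ) < (t.1 v : ℕ)).card = i ∧
    (Finset.univ.filter fun v : ↥A => (t.1 v : ℕ) < (v : ℕ) ∧ t.2 v ≠ v).card = j) := by
  rw [Lset, Finset.mem_filter]
  simp only [Finset.mem_univ, true_and]


lemma fwd_main (hA : A.Nonempty) {i j : ℕ} (hj : 1 ≤ j)
    {t : (↥A → ↥A) × (↥A → ↥A)} (ht : t ∈ Lset A i j) :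
    Fmap A t ∈ Lset A (i + 1) (j - 1) ∧ omegaL A (Fmap A t) = omegaL A t ∧
      Gmap A (Fmap A t) = t := by
  obtain ⟨p, φ⟩ := t
  obtain ⟨h1, h2, h3, h4, h5, h6, h7, h8⟩ := mem_Lset.mp ht
  dsimp only at h1 h2 h3 h4 h5 h6 h7 h8
  -- the sorted set and its maximum
  have hScard : (SF A (p, φ)).card = j := h8
  have hSne : (SF A (p, φ)).Nonempty := Finset.card_pos.mp (by omega)
  set v := (SF A (p, φ)).max' hSne with hvdef
  have hvS : v ∈ SF A (p, φ) := Finset.max'_mem _ _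
  have hvS' := hvS
  rw [SF, Finset.mem_filter] at hvS'
  obtain ⟨-, hv1, hv2⟩ := hvS'
  dsimp only at hv1 hv2
  have hvmax : ∀ x : ↥A, (p x : ℕ) < (x : ℕ) → φ x ≠ x → (x : ℕ) ≤ (v : ℕ) := by
    intro x hx1 hx2
    exact Subtype.coe_le_coe.mpr (Finset.le_max' _ x
      (by rw [SF, Finset.mem_filter]; exact ⟨Finset.mem_univ _, hx1, hx2⟩))
  -- the witness w
  set w := φ v with hwdef
  obtain ⟨hwhook, hwle⟩ := h4 v hv1
  have hvw : (v : ℕ) < (w : ℕ) :=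
    lt_of_le_of_ne hwle (fun h => hv2 (Subtype.ext h.symm))
  have hw : ∃ k, p^[k] w = v := (mem_hookS p v w).mp hwhook
  set k0 := Nat.find hw with hk0def
  have hk0 : p^[k0] w = v := Nat.find_spec hw
  have hk0min : ∀ l, l < k0 → p^[l] w ≠ v := fun l hl => Nat.find_min hw hl
  have hk0pos : 1 ≤ k0 := by
    rcases Nat.eq_zero_or_pos k0 with h0 | h0
    · rw [h0] at hk0; simp only [Function.iterate_zero, id_eq] at hk0
      exact absurd (congrArg (fun z : ↥A => (z : ℕ)) hk0) (by simp; omega)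
    · exact h0
  set c := p^[k0 - 1] w with hcdef
  have hpc : p c = v := by
    have hq : p^[(k0 - 1) + 1] w = v := by rw [Nat.sub_add_cancel hk0pos]; exact hk0
    rw [Function.iterate_succ_apply'] at hq
    rw [hcdef]; exact hq
  -- root facts
  have hr : p (rt hA) = rt hA := h1 _ (rt_val hA)
  have hreach : ∀ x : ↥A, ∃ k, p^[k] x = rt hA := by
    intro x; obtain ⟨k, hk⟩ := h2 x; exact ⟨k, eq_rt_of_val hk⟩
  have hvr : v ≠ rt hA := by
    intro h; rw [h, hr] at hv1; exact lt_irrefl _ hv1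
  have hrltv : ((rt hA : ↥A) : ℕ) < (v : ℕ) :=
    lt_of_le_of_ne (rt_le hA v) (fun h => hvr (Subtype.ext h.symm))
  have hcv : c ≠ v := by
    intro h; rw [h] at hpc; rw [hpc] at hv1; exact lt_irrefl _ hv1
  have hvc : ∀ k, p^[k] v ≠ c := by
    intro k hk
    have hcyc : p^[k + 1] v = v := by rw [Function.iterate_succ_apply', hk, hpc]
    exact hvr (no_cycle p hr (hreach v) (Nat.le_add_left 1 k) hcyc)
  have hvltc : (v : ℕ) < (c : ℕ) := by
    rcases lt_trichotomy (c : ℕ) (v : ℕ) with h | h | h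
    · exfalso
      have hd : (c : ℕ) < (p c : ℕ) := by rw [hpc]; exact h
      have := h6 c v hd hv1 hv2; omega
    · exact absurd (Subtype.ext h) hcv
    · exact h
  have hrltc : ((rt hA : ↥A) : ℕ) < (c : ℕ) := hrltv.trans hvltc
  have hwc : ∃ k, p^[k] w = c := ⟨k0 - 1, rfl⟩
  have MLL := ML (w := w) hpc hcv hwc hvc
  set p' := fwdP p v c w with hp'def
  set φ' := (fun x : ↥A => if x = v then v else φ x) with hφ'def
  have hFeq : Fmap A (p, φ) = (p', φ') := Fmap_spec A (p, φ) hSne hw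
  have hrnev : rt hA ≠ v := Ne.symm hvr
  have hrnec : rt hA ≠ c := by
    intro h; rw [h] at hrltc; exact lt_irrefl _ hrltc
  have hp'v : p' v = w := fwdP_v p v c w
  have hp'c : p' c = p v := fwdP_c p w hcv
  have hφ'v : φ' v = v := by rw [hφ'def]; simp
  have hφc : φ c = c := by
    by_contra hne
    have hd : (p c : ℕ) < (c : ℕ) := by rw [hpc]; exact hvltc
    have := hvmax c hd hne; omega
  have hφ'c : φ' c = c := by rw [hφ'def]; simp only [if_neg hcv]; exact hφc
  have hφ'other : ∀ x : ↥A, x ≠ v → φ' x = φ x := by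
    intro x hx; rw [hφ'def]; simp only [if_neg hx]
  -- descent chains for small increasing vertices
  have hdesc : ∀ x : ↥A, (p x : ℕ) < (x : ℕ) → φ x ≠ x →
      ∀ l, ((p^[l] x : ↥A) : ℕ) ≤ (x : ℕ) := by
    intro x hx1 hx2 l
    induction l with
    | zero => simp
    | succ n ih =>
      rw [Function.iterate_succ_apply']
      by_cases hz : ((p^[n] x : ↥A) : ℕ) = fmin A
      · rw [h1 _ hz]; exact ih
      · exact le_of_lt (lt_of_lt_of_le (h5 x hx1 hx2 _ ⟨n, rfl⟩ hz) ih)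
  have hagree : ∀ x : ↥A, (p x : ℕ) < (x : ℕ) → φ x ≠ x → (x : ℕ) < (v : ℕ) →
      ∀ l, p'^[l] x = p^[l] x := by
    intro x hx1 hx2 hxv l
    induction l with
    | zero => rfl
    | succ n ih =>
      rw [Function.iterate_succ_apply', Function.iterate_succ_apply', ih, hp'def]
      apply fwdP_other
      · intro h; have := hdesc x hx1 hx2 n; rw [h] at this; omega
      · intro h; have := hdesc x hx1 hx2 n; rw [h] at this; omega
  -- the new decreasing set
  have hDecEq : (Finset.univ.filter fun x : ↥A => (x : ℕ) < (p' x : ℕ)) =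
      insert v (Finset.univ.filter fun x : ↥A => (x : ℕ) < (p x : ℕ)) := by
    ext x
    simp only [Finset.mem_filter, Finset.mem_univ, true_and, Finset.mem_insert]
    by_cases hxv : x = v
    · rw [hxv, hp'v]; simp [hvw]
    · by_cases hxc : x = c
      · rw [hxc, hp'def, fwdP_c p w hcv]
        constructor
        · intro hlt; omega
        · rintro (h | h)
          · exact absurd h (by rw [← hxc]; exact hxv)
          · rw [hpc] at h; omega
      · rw [hp'def, fwdP_other p hxv hxc]; simp [hxv]
  have hvnotDec : v ∉ (Finset.univ.filter fun x : ↥A => (x : ℕ) < (p x : ℕ)) := by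
    simp only [Finset.mem_filter, Finset.mem_univ, true_and]; omega
  -- the new sorted set
  have hSEq : (Finset.univ.filter fun x : ↥A => (p' x : ℕ) < (x : ℕ) ∧ φ' x ≠ x) =
      (SF A (p, φ)).erase v := by
    ext x
    simp only [Finset.mem_filter, Finset.mem_univ, true_and, Finset.mem_erase, SF]
    by_cases hxv : x = v
    · rw [hxv, hφ'v]; simp
    · by_cases hxc : x = c
      · rw [hxc, hφ'c]; simp [hφc, (by rw [← hxc]; exact hxv : c ≠ v)]
      · rw [hp'def, fwdP_other p hxv hxc, hφ'other x hxv]; simp [hxv]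
  refine ⟨?_, ?_, ?_⟩
  · -- membership
    rw [hFeq, mem_Lset]
    dsimp only
    refine ⟨?_, ?_, ?_, ?_, ?_, ?_, ?_, ?_⟩
    · -- root fixed
      intro x hx
      rw [eq_rt_of_val (hA := hA) hx, hp'def, fwdP_other p hrnev hrnec, hr]
    · -- reach root
      intro x
      obtain ⟨k, hk⟩ := hreach x
      obtain ⟨k', hk'⟩ := MLL k x (rt hA) hrnev hk
      exact ⟨k', by rw [hk']; exact rt_val hA⟩
    · -- φ' = id off increasing
      intro x hx
      by_cases hxv : x = v
      · rw [hxv]; exact hφ'v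
      · by_cases hxc : x = c
        · rw [hxc]; exact hφ'c
        · rw [hp'def, fwdP_other p hxv hxc] at hx
          rw [hφ'other x hxv]; exact h3 x hx
    · -- hook condition
      intro x hx
      by_cases hxv : x = v
      · rw [hxv, hp'v] at hx; omega
      · by_cases hxc : x = c
        · rw [hxc, hφ'c]
          exact ⟨(mem_hookS _ _ _).mpr ⟨0, rfl⟩, le_refl _⟩
        · rw [hp'def, fwdP_other p hxv hxc] at hx
          rw [hφ'other x hxv]
          by_cases hφx : φ x = x
          · rw [hφx]; exact ⟨(mem_hookS _ _ _).mpr ⟨0, rfl⟩, le_refl _⟩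
          · obtain ⟨hhook, hle⟩ := h4 x hx
            obtain ⟨k, hk⟩ := (mem_hookS p x (φ x)).mp hhook
            obtain ⟨k', hk'⟩ := MLL k (φ x) x hxv hk
            exact ⟨(mem_hookS _ _ _).mpr ⟨k', hk'⟩, hle⟩
    · -- ancestors of sorted vertices are increasing
      intro x hx1 hx2 u hu hur
      by_cases hxv : x = v
      · rw [hxv, hφ'v] at hx2; exact absurd rfl hx2
      · by_cases hxc : x = c
        · rw [hxc, hφ'c] at hx2; exact absurd rfl hx2
        · rw [hp'def, fwdP_other p hxv hxc] at hx1
          rw [hφ'other x hxv] at hx2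
          have hxle : (x : ℕ) ≤ (v : ℕ) := hvmax x hx1 hx2
          have hxltv : (x : ℕ) < (v : ℕ) :=
            lt_of_le_of_ne hxle (fun h => hxv (Subtype.ext h))
          obtain ⟨k, hk⟩ := hu
          have hk2 : p^[k] x = u := by rw [← hagree x hx1 hx2 hxltv k]; exact hk
          have hub := h5 x hx1 hx2 u ⟨k, hk2⟩ hur
          have huval : (u : ℕ) ≤ (x : ℕ) := by rw [← hk2]; exact hdesc x hx1 hx2 k
          rw [hp'def, fwdP_other p
            (by intro h; rw [h] at huval; omega)
            (by intro h; rw [h] at huval; omega)]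
          exact hub
    · -- sorted below decreasing
      intro z u hz1 hz2 hz3
      have huv : u ≠ v := by intro h; rw [h, hφ'v] at hz3; exact hz3 rfl
      have huc : u ≠ c := by intro h; rw [h, hφ'c] at hz3; exact hz3 rfl
      rw [hφ'other u huv] at hz3
      rw [hp'def, fwdP_other p huv huc] at hz2
      have hultv : (u : ℕ) < (v : ℕ) :=
        lt_of_le_of_ne (hvmax u hz2 hz3) (fun h => huv (Subtype.ext h))
      by_cases hzv : z = v
      · rw [hzv]; exact hultv
      · by_cases hzc : z = c
        · rw [hzc, hp'def, fwdP_c p w hcv] at hz1; omega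
        · rw [hp'def, fwdP_other p hzv hzc] at hz1
          exact h6 z u hz1 hz2 hz3
    · -- count decreasing
      rw [hDecEq, Finset.card_insert_of_notMem hvnotDec, h7]
    · -- count sorted
      rw [hSEq, Finset.card_erase_of_mem hvS, hScard]
  · -- weight preservation
    have hIncEq : (Finset.univ.filter fun x : ↥A => (p' x : ℕ) < (x : ℕ)) =
        (Finset.univ.filter fun x : ↥A => (p x : ℕ) < (x : ℕ)).erase v := by
      ext x
      simp only [Finset.mem_filter, Finset.mem_univ, true_and, Finset.mem_erase]
      by_cases hxv : x = v
      · rw [hxv, hp'v]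
        constructor
        · intro hlt; omega
        · rintro ⟨hne, -⟩; exact absurd rfl hne
      · by_cases hxc : x = c
        · rw [hxc, hp'def, fwdP_c p w hcv]
          constructor
          · intro _; exact ⟨(by rw [← hxc]; exact hxv : c ≠ v), by rw [hpc]; exact hvltc⟩
          · intro _; omega
        · rw [hp'def, fwdP_other p hxv hxc]; simp [hxv]
    have hvInc : v ∈ Finset.univ.filter fun x : ↥A => (p x : ℕ) < (x : ℕ) := by
      simp only [Finset.mem_filter, Finset.mem_univ, true_and]; exact hv1
    have hcIncE : c ∈ (Finset.univ.filter fun x : ↥A => (p x : ℕ) < (x : ℕ)).erase v := by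
      simp only [Finset.mem_erase, Finset.mem_filter, Finset.mem_univ, true_and]
      exact ⟨hcv, by rw [hpc]; exact hvltc⟩
    rw [hFeq, omegaL, omegaL]
    dsimp only
    rw [hIncEq, hDecEq, Finset.prod_insert hvnotDec]
    rw [← Finset.mul_prod_erase _ _ hcIncE]
    conv_rhs => rw [← Finset.mul_prod_erase _ _ hvInc, ← Finset.mul_prod_erase _ _ hcIncE]
    have hprodInc : (∏ x ∈ ((Finset.univ.filter fun x : ↥A =>
          (p x : ℕ) < (x : ℕ)).erase v).erase c,
          X (Sum.inl (p' x : ℕ)) * X (Sum.inr ((x : ℕ), (φ' x : ℕ)))) =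
        ∏ x ∈ ((Finset.univ.filter fun x : ↥A => (p x : ℕ) < (x : ℕ)).erase v).erase c,
          (X (Sum.inl (p x : ℕ)) * X (Sum.inr ((x : ℕ), (φ x : ℕ))) :
            MvPolynomial (ℕ ⊕ ℕ × ℕ) ℤ) := by
      apply Finset.prod_congr rfl
      intro x hx
      simp only [Finset.mem_erase] at hx
      rw [hp'def, fwdP_other p hx.2.1 hx.1, hφ'other x hx.2.1]
    have hprodDec : (∏ x ∈ Finset.univ.filter fun x : ↥A => (x : ℕ) < (p x : ℕ),
          X (Sum.inl (x : ℕ)) * X (Sum.inr ((x : ℕ), (p' x : ℕ)))) =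
        ∏ x ∈ Finset.univ.filter fun x : ↥A => (x : ℕ) < (p x : ℕ),
          (X (Sum.inl (x : ℕ)) * X (Sum.inr ((x : ℕ), (p x : ℕ))) :
            MvPolynomial (ℕ ⊕ ℕ × ℕ) ℤ) := by
      apply Finset.prod_congr rfl
      intro x hx
      simp only [Finset.mem_filter, Finset.mem_univ, true_and] at hx
      have hxv : x ≠ v := by intro h; rw [h] at hx; omega
      have hxc : x ≠ c := by intro h; rw [h, hpc] at hx; omega
      rw [hp'def, fwdP_other p hxv hxc]
    rw [hprodInc, hprodDec, hp'c, hp'v, hφ'c, hφc, hpc, ← hwdef]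
    ring
  · -- round trip
    rw [hFeq]
    have hDF' : DF A (p', φ') = insert v (DF A (p, φ)) := hDecEq
    have hD'ne : (DF A (p', φ')).Nonempty := by
      rw [hDF']; exact Finset.insert_nonempty _ _
    have hminEq : (DF A (p', φ')).min' hD'ne = v := by
      apply le_antisymm
      · exact Finset.min'_le _ v (by rw [hDF']; exact Finset.mem_insert_self _ _)
      · apply Finset.le_min'
        intro y hy
        rw [hDF', Finset.mem_insert] at hy
        rcases hy with rfl | hy
        · exact le_rfl
        · rw [DF, Finset.mem_filter] at hy
          exact Subtype.coe_le_coe.mp (le_of_lt (h6 y v hy.2 hv1 hv2))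
    have qch : ∀ d, d ≤ k0 - 1 → p'^[d + 1] v = p^[d] w := by
      intro d
      induction d with
      | zero =>
        intro _
        simp only [Function.iterate_one, Function.iterate_zero, id_eq]
        exact hp'v
      | succ n ih =>
        intro hn
        have hih := ih (by omega)
        rw [Function.iterate_succ_apply', hih, Function.iterate_succ_apply']
        apply fwdP_other
        · exact hk0min n (by omega)
        · intro h
          have hbad : p^[n + 1] w = v := by rw [Function.iterate_succ_apply', h, hpc]
          exact hk0min (n + 1) (by omega) hbad
    have hp'k0 : p'^[k0] v = c := by
      have hq := qch (k0 - 1) le_rfl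
      rw [Nat.sub_add_cancel hk0pos] at hq
      rw [hcdef]; exact hq
    have hp'k01 : p'^[k0 + 1] v = p v := by
      rw [Function.iterate_succ_apply', hp'k0]; exact hp'c
    have qgt' : ∀ e, e ≤ k0 - 1 → (v : ℕ) < ((p^[k0 - 1 - e] w : ↥A) : ℕ) := by
      intro e
      induction e with
      | zero => intro _; rw [Nat.sub_zero, ← hcdef]; exact hvltc
      | succ n ih =>
        intro hn
        have hlt := ih (by omega)
        have hpx : p (p^[k0 - 1 - (n + 1)] w) = p^[k0 - 1 - n] w := by
          rw [show k0 - 1 - n = (k0 - 1 - (n + 1)) + 1 by omega,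
            Function.iterate_succ_apply']
        have hxnev : p^[k0 - 1 - (n + 1)] w ≠ v := hk0min _ (by omega)
        rcases lt_trichotomy ((p^[k0 - 1 - (n + 1)] w : ↥A) : ℕ) (v : ℕ) with h | h | h
        · exfalso
          have hd : ((p^[k0 - 1 - (n + 1)] w : ↥A) : ℕ) <
              ((p (p^[k0 - 1 - (n + 1)] w) : ↥A) : ℕ) := by rw [hpx]; omega
          have := h6 _ v hd hv1 hv2; omega
        · exact absurd (Subtype.ext h) hxnev
        · exact h
    have qgt : ∀ d, d ≤ k0 - 1 → (v : ℕ) < ((p^[d] w : ↥A) : ℕ) := by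
      intro d hd
      have hq := qgt' (k0 - 1 - d) (by omega)
      rwa [show k0 - 1 - (k0 - 1 - d) = d by omega] at hq
    have hmG : ∃ k, (((p', φ').1^[k + 1] ((DF A (p', φ')).min' hD'ne) : ↥A) : ℕ) <
        (((DF A (p', φ')).min' hD'ne : ↥A) : ℕ) := by
      rw [hminEq]
      exact ⟨k0, by rw [hp'k01]; exact hv1⟩
    have hfind : Nat.find hmG = k0 := by
      rw [Nat.find_eq_iff]
      constructor
      · rw [hminEq]
        show ((p'^[k0 + 1] v : ↥A) : ℕ) < (v : ℕ)
        rw [hp'k01]; exact hv1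
      · intro n hn hPn
        rw [hminEq] at hPn
        have hq : p'^[n + 1] v = p^[n] w := qch n (by omega)
        rw [hq] at hPn
        have := qgt n (by omega)
        omega
    rw [Gmap_spec A (p', φ') hD'ne hmG, hfind, hminEq, hp'k0]
    refine Prod.ext ?_ ?_
    · funext x
      show bwdP p' v c x = p x
      by_cases hxv : x = v
      · rw [hxv, bwdP_v, hp'c]
      · by_cases hxc : x = c
        · rw [hxc, bwdP_c p' hcv, hpc]
        · rw [bwdP_other p' hxv hxc, hp'def, fwdP_other p hxv hxc]
    · funext x
      show (if x = v then p' v else φ' x) = φ x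
      by_cases hxv : x = v
      · rw [hxv, if_pos rfl, hp'v, hwdef]
      · simp only [if_neg hxv]
        exact hφ'other x hxv


lemma bwd_main (hA : A.Nonempty) {i j : ℕ} (hj : 1 ≤ j)
    {t : (↥A → ↥A) × (↥A → ↥A)} (ht : t ∈ Lset A (i + 1) (j - 1)) :
    Gmap A t ∈ Lset A i j ∧ Fmap A (Gmap A t) = t := by
  obtain ⟨p', φ'⟩ := t
  obtain ⟨g1, g2, g3, g4, g5, g6, g7, g8⟩ := mem_Lset.mp ht
  dsimp only at g1 g2 g3 g4 g5 g6 g7 g8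
  have hDcard : (DF A (p', φ')).card = i + 1 := g7
  have hDne : (DF A (p', φ')).Nonempty := Finset.card_pos.mp (by omega)
  set v := (DF A (p', φ')).min' hDne with hvdef
  have hvD : v ∈ DF A (p', φ') := Finset.min'_mem _ _
  have hvD' := hvD
  rw [DF, Finset.mem_filter] at hvD'
  have hv1 : (v : ℕ) < (p' v : ℕ) := hvD'.2
  have hvmin : ∀ y : ↥A, (y : ℕ) < (p' y : ℕ) → (v : ℕ) ≤ (y : ℕ) := by
    intro y hy
    exact Subtype.coe_le_coe.mpr (Finset.min'_le _ y
      (by rw [DF, Finset.mem_filter]; exact ⟨Finset.mem_univ _, hy⟩))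
  have hr : p' (rt hA) = rt hA := g1 _ (rt_val hA)
  have hreach : ∀ x : ↥A, ∃ k, p'^[k] x = rt hA := by
    intro x; obtain ⟨k, hk⟩ := g2 x; exact ⟨k, eq_rt_of_val hk⟩
  have hvr : v ≠ rt hA := by
    intro h; rw [h, hr] at hv1; exact lt_irrefl _ hv1
  have hrltv : ((rt hA : ↥A) : ℕ) < (v : ℕ) :=
    lt_of_le_of_ne (rt_le hA v) (fun h => hvr (Subtype.ext h.symm))
  have nofix : ∀ u : ↥A, u ≠ rt hA → p' u ≠ u := by
    intro u hu hfix
    obtain ⟨K, hK⟩ := hreach u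
    rw [Function.iterate_fixed hfix] at hK
    exact hu hK
  have hm : ∃ k, ((p'^[k + 1] v : ↥A) : ℕ) < (v : ℕ) := by
    obtain ⟨K, hK⟩ := hreach v
    rcases K with _ | K
    · exact absurd hK.symm hvr.symm
    · exact ⟨K, by rw [hK]; exact hrltv⟩
  set m := Nat.find hm with hmdef
  have hmspec : ((p'^[m + 1] v : ↥A) : ℕ) < (v : ℕ) := Nat.find_spec hm
  have hmmin : ∀ l, l < m → ¬ ((p'^[l + 1] v : ↥A) : ℕ) < (v : ℕ) :=
    fun l hl => Nat.find_min hm hl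
  have hm1 : 1 ≤ m := by
    rcases Nat.eq_zero_or_pos m with h0 | h0
    · exfalso; rw [h0] at hmspec
      simp only [Function.iterate_one, Nat.zero_add] at hmspec; omega
    · exact h0
  set w := p' v with hwdef
  have Useg : ∀ l, 1 ≤ l → l ≤ m → (v : ℕ) < ((p'^[l] v : ↥A) : ℕ) := by
    intro l hl1 hl2
    have hnlt : ¬ ((p'^[l] v : ↥A) : ℕ) < (v : ℕ) := by
      have := hmmin (l - 1) (by omega)
      rwa [Nat.sub_add_cancel hl1] at this
    have hne : p'^[l] v ≠ v := by
      intro hcyc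
      exact hvr (no_cycle p' hr (hreach v) hl1 hcyc)
    rcases lt_trichotomy ((p'^[l] v : ↥A) : ℕ) (v : ℕ) with h | h | h
    · exact absurd h hnlt
    · exact absurd (Subtype.ext h) hne
    · exact h
  set c := p'^[m] v with hcdef
  have hvltc : (v : ℕ) < (c : ℕ) := Useg m hm1 le_rfl
  have hcv : c ≠ v := by
    intro h
    have := congrArg (fun z : ↥A => (z : ℕ)) h
    omega
  have hcp : p' c = p'^[m + 1] v := by
    rw [hcdef, ← Function.iterate_succ_apply' p' m v]
  have hp'c : ((p' c : ↥A) : ℕ) < (v : ℕ) := by rw [hcp]; exact hmspec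
  have useg_ne_c : ∀ l, 1 ≤ l → l < m → p'^[l] v ≠ c := by
    intro l hl1 hl2 h
    have hcyc : p'^[m - l] c = c := by
      have h2 : p'^[m - l] (p'^[l] v) = p'^[m] v := by
        rw [← Function.iterate_add_apply, show m - l + l = m by omega]
      rw [h] at h2
      exact h2.trans hcdef.symm
    have := no_cycle p' hr (hreach c) (d := m - l) (by omega) hcyc
    rw [this] at hvltc
    have := rt_le hA v; omega
  set pn := bwdP p' v c with hpndef
  set φn := (fun x : ↥A => if x = v then w else φ' x) with hφndef
  have hGeq : Gmap A (p', φ') = (pn, φn) := Gmap_spec A (p', φ') hDne hm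
  have hpnv : pn v = p' c := bwdP_v p' v c
  have hpnc : pn c = v := bwdP_c p' hcv
  have hφnv : φn v = w := by rw [hφndef]; simp
  have hφ'v : φ' v = v := g3 v (by rw [← hwdef]; omega)
  have hφ'c : φ' c = c := by
    by_contra hne
    have hcinc : (p' c : ℕ) < (c : ℕ) := by omega
    have := g6 v c hv1 hcinc hne
    omega
  have hφnc : φn c = c := by rw [hφndef]; simp only [if_neg hcv]; exact hφ'c
  have hφnother : ∀ x : ↥A, x ≠ v → φn x = φ' x := by
    intro x hx; rw [hφndef]; simp only [if_neg hx]
  have hsmall : ∀ x : ↥A, (p' x : ℕ) < (x : ℕ) → φ' x ≠ x → (x : ℕ) < (v : ℕ) :=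
    fun x hx1 hx2 => g6 v x hv1 hx1 hx2
  have hwnev : w ≠ v := by
    intro h; rw [h] at hv1; omega
  -- chain of w down to v in the new tree
  have chain_w : ∀ d, d ≤ m - 1 → pn^[d] w = p'^[d + 1] v := by
    intro d
    induction d with
    | zero =>
      intro _
      simp only [Function.iterate_zero, id_eq, Function.iterate_one]
      exact hwdef
    | succ n ih =>
      intro hn
      have hih := ih (by omega)
      rw [Function.iterate_succ_apply', hih]
      conv_rhs => rw [Function.iterate_succ_apply']
      apply bwdP_other
      · intro h
        have := Useg (n + 1) (by omega) (by omega)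
        rw [h] at this; omega
      · exact useg_ne_c (n + 1) (by omega) (by omega)
  have hw_reach_v : pn^[m] w = v := by
    have h0 : pn^[m - 1] w = p'^[m] v := by
      have := chain_w (m - 1) le_rfl
      rwa [Nat.sub_add_cancel hm1] at this
    have h1 : pn^[(m - 1) + 1] w = v := by
      rw [Function.iterate_succ_apply', h0, ← hcdef]; exact hpnc
    rwa [Nat.sub_add_cancel hm1] at h1
  have chain_low : ∀ d, ((p'^[d] (p' c) : ↥A) : ℕ) < (v : ℕ) := by
    intro d
    induction d with
    | zero => simpa using hp'c
    | succ n ih =>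
      rw [Function.iterate_succ_apply']
      rcases lt_trichotomy ((p' (p'^[n] (p' c)) : ↥A) : ℕ) ((p'^[n] (p' c) : ↥A) : ℕ)
        with h | h | h
      · omega
      · omega
      · exfalso
        have := hvmin _ h
        omega
  have chain_v : ∀ d, pn^[d + 1] v = p'^[d] (p' c) := by
    intro d
    induction d with
    | zero => simpa using hpnv
    | succ n ih =>
      rw [Function.iterate_succ_apply', ih, Function.iterate_succ_apply']
      apply bwdP_other
      · intro h
        have := chain_low n
        rw [h] at this; omega
      · intro h
        have := chain_low n
        rw [h] at this; omega
  have BMLL := BML (p' := p') (v := v) (m := m) hcv hcdef.symm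
  have seg_cond : ∀ x : ↥A, (x : ℕ) < (v : ℕ) → ∀ l, 1 ≤ l → l ≤ m → p'^[l] v ≠ x := by
    intro x hx l hl1 hl2 h
    have := Useg l hl1 hl2
    rw [h] at this; omega
  have hrnev : rt hA ≠ v := Ne.symm hvr
  have hrnec : rt hA ≠ c := by
    intro h; rw [← h] at hvltc
    have := rt_le hA v; omega
  -- descent for sorted vertices of t'
  have hdesc : ∀ x : ↥A, (p' x : ℕ) < (x : ℕ) → φ' x ≠ x →
      ∀ l, ((p'^[l] x : ↥A) : ℕ) ≤ (x : ℕ) := by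
    intro x hx1 hx2 l
    induction l with
    | zero => simp
    | succ n ih =>
      rw [Function.iterate_succ_apply']
      by_cases hz : ((p'^[n] x : ↥A) : ℕ) = fmin A
      · rw [g1 _ hz]; exact ih
      · exact le_of_lt (lt_of_lt_of_le (g5 x hx1 hx2 _ ⟨n, rfl⟩ hz) ih)
  have hagree : ∀ x : ↥A, (p' x : ℕ) < (x : ℕ) → φ' x ≠ x → (x : ℕ) < (v : ℕ) →
      ∀ l, pn^[l] x = p'^[l] x := by
    intro x hx1 hx2 hxv l
    induction l with
    | zero => rfl
    | succ n ih =>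
      rw [Function.iterate_succ_apply', Function.iterate_succ_apply', ih, hpndef]
      apply bwdP_other
      · intro h; have := hdesc x hx1 hx2 n; rw [h] at this; omega
      · intro h; have := hdesc x hx1 hx2 n; rw [h] at this; omega
  -- new decreasing and sorted sets
  have hDecEq : (Finset.univ.filter fun x : ↥A => (x : ℕ) < (pn x : ℕ)) =
      (Finset.univ.filter fun x : ↥A => (x : ℕ) < (p' x : ℕ)).erase v := by
    ext x
    simp only [Finset.mem_filter, Finset.mem_univ, true_and, Finset.mem_erase]
    by_cases hxv : x = v
    · rw [hxv, hpnv]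
      constructor
      · intro h; omega
      · rintro ⟨hne, -⟩; exact absurd rfl hne
    · by_cases hxc : x = c
      · rw [hxc, hpnc]
        constructor
        · intro h; omega
        · rintro ⟨-, h⟩
          omega
      · rw [hpndef, bwdP_other p' hxv hxc]
        simp [hxv]
  have hSEq : (Finset.univ.filter fun x : ↥A => (pn x : ℕ) < (x : ℕ) ∧ φn x ≠ x) =
      insert v (Finset.univ.filter fun x : ↥A => (p' x : ℕ) < (x : ℕ) ∧ φ' x ≠ x) := by
    ext x
    simp only [Finset.mem_filter, Finset.mem_univ, true_and, Finset.mem_insert]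
    by_cases hxv : x = v
    · constructor
      · intro _; left; rw [hxv]
      · intro _
        rw [hxv, hpnv, hφnv]
        exact ⟨by omega, hwnev⟩
    · by_cases hxc : x = c
      · rw [hxc, hpnc, hφnc]
        constructor
        · rintro ⟨-, h⟩; exact absurd rfl h
        · rintro (h | ⟨-, h⟩)
          · exact absurd h (by rw [← hxc]; exact hxv)
          · rw [hφ'c] at h; exact absurd rfl h
      · rw [hpndef, bwdP_other p' hxv hxc, hφnother x hxv]
        simp [hxv]
  have hvnotS : v ∉ (Finset.univ.filter fun x : ↥A => (p' x : ℕ) < (x : ℕ) ∧ φ' x ≠ x) := by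
    simp only [Finset.mem_filter, Finset.mem_univ, true_and, not_and]
    intro h; exfalso; rw [← hwdef] at h; omega
  constructor
  · -- membership in Lset A i j
    rw [hGeq, mem_Lset]
    dsimp only
    refine ⟨?_, ?_, ?_, ?_, ?_, ?_, ?_, ?_⟩
    · intro x hx
      rw [eq_rt_of_val (hA := hA) hx, hpndef, bwdP_other p' hrnev hrnec, hr]
    · intro x
      obtain ⟨k, hk⟩ := hreach x
      obtain ⟨k', hk'⟩ := BMLL k x (rt hA) (seg_cond _ hrltv) hk
      exact ⟨k', by rw [hk']; exact rt_val hA⟩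
    · intro x hx
      by_cases hxv : x = v
      · exfalso; rw [hxv, hpnv] at hx; omega
      · by_cases hxc : x = c
        · exfalso; rw [hxc, hpnc] at hx; omega
        · rw [hpndef, bwdP_other p' hxv hxc] at hx
          rw [hφnother x hxv]; exact g3 x hx
    · intro x hx
      by_cases hxv : x = v
      · rw [hxv, hφnv]
        exact ⟨(mem_hookS _ _ _).mpr ⟨m, hw_reach_v⟩, by omega⟩
      · by_cases hxc : x = c
        · rw [hxc, hφnc]
          exact ⟨(mem_hookS _ _ _).mpr ⟨0, rfl⟩, le_refl _⟩
        · rw [hpndef, bwdP_other p' hxv hxc] at hx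
          rw [hφnother x hxv]
          by_cases hφx : φ' x = x
          · rw [hφx]; exact ⟨(mem_hookS _ _ _).mpr ⟨0, rfl⟩, le_refl _⟩
          · obtain ⟨hhook, hle⟩ := g4 x hx
            obtain ⟨k, hk⟩ := (mem_hookS p' x (φ' x)).mp hhook
            obtain ⟨k', hk'⟩ := BMLL k (φ' x) x (seg_cond x (hsmall x hx hφx)) hk
            exact ⟨(mem_hookS _ _ _).mpr ⟨k', hk'⟩, hle⟩
    · intro x hx1 hx2 u hu hur
      have hunr : u ≠ rt hA := fun h => hur (by rw [h]; exact rt_val hA)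
      by_cases hxv : x = v
      · -- ancestors of v in the new tree
        obtain ⟨k, hk⟩ := hu
        rw [hxv] at hk
        rcases k with _ | k
        · simp only [Function.iterate_zero, id_eq] at hk
          rw [← hk, hpnv]; omega
        · rw [chain_v k] at hk
          have hulow : (u : ℕ) < (v : ℕ) := by rw [← hk]; exact chain_low k
          have hunv : u ≠ v := by intro h; rw [h] at hulow; omega
          have hunc : u ≠ c := by intro h; rw [h] at hulow; omega
          rw [hpndef, bwdP_other p' hunv hunc]
          rcases lt_trichotomy ((p' u : ↥A) : ℕ) ((u : ↥A) : ℕ) with h | h | h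
          · exact h
          · exact absurd (Subtype.ext h) (nofix u hunr)
          · exfalso; have := hvmin u (by omega); omega
      · by_cases hxc : x = c
        · rw [hxc, hφnc] at hx2; exact absurd rfl hx2
        · rw [hpndef, bwdP_other p' hxv hxc] at hx1
          rw [hφnother x hxv] at hx2
          have hxltv : (x : ℕ) < (v : ℕ) := hsmall x hx1 hx2
          obtain ⟨k, hk⟩ := hu
          have hk2 : p'^[k] x = u := by rw [← hagree x hx1 hx2 hxltv k]; exact hk
          have hub := g5 x hx1 hx2 u ⟨k, hk2⟩ hur
          have huval : (u : ℕ) ≤ (x : ℕ) := by rw [← hk2]; exact hdesc x hx1 hx2 k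
          rw [hpndef, bwdP_other p'
            (by intro h; rw [h] at huval; omega)
            (by intro h; rw [h] at huval; omega)]
          exact hub
    · intro z u hz1 hz2 hz3
      have hzv : z ≠ v := by
        intro h; rw [h, hpnv] at hz1; omega
      have hzc : z ≠ c := by
        intro h; rw [h, hpnc] at hz1; omega
      rw [hpndef, bwdP_other p' hzv hzc] at hz1
      have hvltz : (v : ℕ) ≤ (z : ℕ) := hvmin z hz1
      have hvnez : (v : ℕ) ≠ (z : ℕ) := fun h => hzv (Subtype.ext h.symm)
      by_cases huv : u = v
      · rw [huv]; omega
      · by_cases huc : u = c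
        · rw [huc, hφnc] at hz3; exact absurd rfl hz3
        · rw [hφnother u huv] at hz3
          rw [hpndef, bwdP_other p' huv huc] at hz2
          exact g6 z u hz1 hz2 hz3
    · have hvD2 : v ∈ Finset.univ.filter fun x : ↥A => (x : ℕ) < (p' x : ℕ) := hvD
      have hDcard2 : (Finset.univ.filter fun x : ↥A => (x : ℕ) < (p' x : ℕ)).card = i + 1 :=
        hDcard
      rw [hDecEq, Finset.card_erase_of_mem hvD2, hDcard2]
      omega
    · rw [hSEq, Finset.card_insert_of_notMem hvnotS, g8]
      omega
  · -- round trip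
    rw [hGeq]
    have hSF' : SF A (pn, φn) =
        insert v (Finset.univ.filter fun x : ↥A => (p' x : ℕ) < (x : ℕ) ∧ φ' x ≠ x) := hSEq
    have hSFne : (SF A (pn, φn)).Nonempty := by
      rw [hSF']; exact Finset.insert_nonempty _ _
    have hmaxEq : (SF A (pn, φn)).max' hSFne = v := by
      apply le_antisymm
      · apply Finset.max'_le
        intro y hy
        rw [hSF', Finset.mem_insert] at hy
        rcases hy with rfl | hy
        · exact le_rfl
        · rw [Finset.mem_filter] at hy
          exact Subtype.coe_le_coe.mp (le_of_lt (hsmall y hy.2.1 hy.2.2))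
      · exact Finset.le_max' _ v (by rw [hSF']; exact Finset.mem_insert_self _ _)
    have hwF : ∃ k, (pn, φn).1^[k] ((pn, φn).2 ((SF A (pn, φn)).max' hSFne)) =
        (SF A (pn, φn)).max' hSFne := by
      rw [hmaxEq]
      show ∃ k, pn^[k] (φn v) = v
      rw [hφnv]
      exact ⟨m, hw_reach_v⟩
    have hfindF : Nat.find hwF = m := by
      rw [Nat.find_eq_iff]
      constructor
      · rw [hmaxEq]
        show pn^[m] (φn v) = v
        rw [hφnv]; exact hw_reach_v
      · intro n hn hPn
        rw [hmaxEq] at hPn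
        have hPn' : pn^[n] (φn v) = v := hPn
        rw [hφnv, chain_w n (by omega)] at hPn'
        have := Useg (n + 1) (by omega) (by omega)
        rw [hPn'] at this; omega
    rw [Fmap_spec A (pn, φn) hSFne hwF, hfindF, hmaxEq]
    have hcF : pn^[m - 1] (φn v) = c := by
      rw [hφnv]
      have h0 := chain_w (m - 1) le_rfl
      rw [Nat.sub_add_cancel hm1] at h0
      rw [h0, hcdef]
    refine Prod.ext ?_ ?_
    · funext x
      show fwdP (pn, φn).1 v (pn^[m - 1] (φn v)) ((pn, φn).2 v) x = p' x
      rw [hcF]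
      show fwdP pn v c (φn v) x = p' x
      rw [hφnv]
      by_cases hxv : x = v
      · rw [hxv, fwdP_v]
      · by_cases hxc : x = c
        · rw [hxc, fwdP_c pn (w := w) hcv, hpnv]
        · rw [fwdP_other pn hxv hxc, hpndef, bwdP_other p' hxv hxc]
    · funext x
      show (if x = v then v else (pn, φn).2 x) = φ' x
      by_cases hxv : x = v
      · rw [hxv, if_pos rfl, hφ'v]
      · rw [if_neg hxv]
        show φn x = φ' x
        exact hφnother x hxv

end Unsort


/-- Unsorting bijection (Theorem 2.1): for `j ≥ 1` there is a weight-preserving bijection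
between `L_{i,j}(A)` and `L_{i+1,j-1}(A)`. -/
theorem unsorting_bijection (A : Finset ℕ) (hA : A.Nonempty) (hpos : ∀ i ∈ A, 0 < i)
    (i j : ℕ) (hj : 1 ≤ j) :
    ∃ e : {t // t ∈ Lset A i j} ≃ {t // t ∈ Lset A (i + 1) (j - 1)},
      ∀ t : {t // t ∈ Lset A i j}, omegaL A t.1 = omegaL A (e t).1 := by
  refine ⟨{ toFun := fun t => ⟨Unsort.Fmap A t.1, (Unsort.fwd_main hA hj t.2).1⟩
            invFun := fun t => ⟨Unsort.Gmap A t.1, (Unsort.bwd_main hA hj t.2).1⟩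
            left_inv := ?_
            right_inv := ?_ }, ?_⟩
  · intro t
    exact Subtype.ext (Unsort.fwd_main hA hj t.2).2.2
  · intro t
    exact Subtype.ext (Unsort.bwd_main hA hj t.2).2
  · intro t
    exact ((Unsort.fwd_main hA hj t.2).2.1).symm
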